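/- Let A be an associative unital algebra over ℂ with a comultiplication Δ such that the left leg of Δ is all of A. If there exists a faithful left integral on A, then the linear map T₁ : A ⊗ A → A ⊗ A determined by T₁(a ⊗ b) = Δ(a)(1 ⊗ b) is surjective. -/

import Mathlib

open TensorProduct

noncomputable section

variable {A : Type*} [Ring A] [Algebra ℂ A]

/-- The slice map `id ⊗ ω : A ⊗ A → A`. -/
def sliceR (ω : A →ₗ[ℂ] ℂ) : A ⊗[ℂ] A →ₗ[ℂ] A :=
  (TensorProduct.rid ℂ A).toLinearMap ∘ₗ TensorProduct.map LinearMap.id ω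

/-- The slice map `ω ⊗ id : A ⊗ A → A`. -/
def sliceL (ω : A →ₗ[ℂ] ℂ) : A ⊗[ℂ] A →ₗ[ℂ] A :=
  (TensorProduct.lid ℂ A).toLinearMap ∘ₗ TensorProduct.map ω LinearMap.id

/-- Coassociativity of a comultiplication `Δ : A → A ⊗ A`:
`(Δ ⊗ id) ∘ Δ = (id ⊗ Δ) ∘ Δ` (up to the associator). -/
def IsCoassoc (Δ : A →ₐ[ℂ] A ⊗[ℂ] A) : Prop :=
  ∀ a : A,
    TensorProduct.assoc ℂ A A A (TensorProduct.map Δ.toLinearMap LinearMap.id (Δ a)) =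
      TensorProduct.map LinearMap.id Δ.toLinearMap (Δ a)

/-- A left integral: a nonzero functional with `(id ⊗ φ)(Δ a) = φ(a)·1` for all `a`. -/
def IsLeftIntegral (Δ : A →ₐ[ℂ] A ⊗[ℂ] A) (φ : A →ₗ[ℂ] ℂ) : Prop :=
  φ ≠ 0 ∧ ∀ a : A, sliceR φ (Δ a) = φ a • (1 : A)

/-- A right integral: a nonzero functional with `(ψ ⊗ id)(Δ a) = ψ(a)·1` for all `a`. -/
def IsRightIntegral (Δ : A →ₐ[ℂ] A ⊗[ℂ] A) (ψ : A →ₗ[ℂ] ℂ) : Prop :=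
  ψ ≠ 0 ∧ ∀ a : A, sliceL ψ (Δ a) = ψ a • (1 : A)

/-- A faithful functional: the bilinear form `(a, b) ↦ ω(ab)` is non-degenerate. -/
def IsFaithful (ω : A →ₗ[ℂ] ℂ) : Prop :=
  (∀ b : A, (∀ a : A, ω (a * b) = 0) → b = 0) ∧
  (∀ b : A, (∀ a : A, ω (b * a) = 0) → b = 0)

/-- The left leg of an element `x ∈ A ⊗ A`: the span of `{(id ⊗ ω)(x) : ω ∈ A*}`. -/
def leftLegOf (x : A ⊗[ℂ] A) : Submodule ℂ A :=
  Submodule.span ℂ {y : A | ∃ ω : A →ₗ[ℂ] ℂ, y = sliceR ω x}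

/-- The right leg of an element `x ∈ A ⊗ A`: the span of `{(ω ⊗ id)(x) : ω ∈ A*}`. -/
def rightLegOf (x : A ⊗[ℂ] A) : Submodule ℂ A :=
  Submodule.span ℂ {y : A | ∃ ω : A →ₗ[ℂ] ℂ, y = sliceL ω x}

/-- The left leg of `Δ`: the span of `{(id ⊗ ω)(Δ a) : a ∈ A, ω ∈ A*}`. -/
def leftLeg (Δ : A →ₐ[ℂ] A ⊗[ℂ] A) : Submodule ℂ A :=
  Submodule.span ℂ {y : A | ∃ (a : A) (ω : A →ₗ[ℂ] ℂ), y = sliceR ω (Δ a)}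

/-- The right leg of `Δ`: the span of `{(ω ⊗ id)(Δ a) : a ∈ A, ω ∈ A*}`. -/
def rightLeg (Δ : A →ₐ[ℂ] A ⊗[ℂ] A) : Submodule ℂ A :=
  Submodule.span ℂ {y : A | ∃ (a : A) (ω : A →ₗ[ℂ] ℂ), y = sliceL ω (Δ a)}

/-- A comultiplication is full if both of its legs are all of `A`. -/
def IsFull (Δ : A →ₐ[ℂ] A ⊗[ℂ] A) : Prop :=
  leftLeg Δ = ⊤ ∧ rightLeg Δ = ⊤

/-- The linear map `T₁` with `T₁ (a ⊗ b) = Δ(a) * (1 ⊗ b)`. -/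
def T1 (Δ : A →ₐ[ℂ] A ⊗[ℂ] A) : A ⊗[ℂ] A →ₗ[ℂ] A ⊗[ℂ] A :=
  LinearMap.mul' ℂ (A ⊗[ℂ] A) ∘ₗ
    TensorProduct.map Δ.toLinearMap (TensorProduct.mk ℂ A A 1)

/-- The linear map `T₁'` with `T₁' (a ⊗ b) = Δ(a) * (b ⊗ 1)`. -/
def T1' (Δ : A →ₐ[ℂ] A ⊗[ℂ] A) : A ⊗[ℂ] A →ₗ[ℂ] A ⊗[ℂ] A :=
  LinearMap.mul' ℂ (A ⊗[ℂ] A) ∘ₗ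
    TensorProduct.map Δ.toLinearMap ((TensorProduct.mk ℂ A A).flip 1)

/-- The linear map `T₂` with `T₂ (a ⊗ b) = (a ⊗ 1) * Δ(b)`. -/
def T2 (Δ : A →ₐ[ℂ] A ⊗[ℂ] A) : A ⊗[ℂ] A →ₗ[ℂ] A ⊗[ℂ] A :=
  LinearMap.mul' ℂ (A ⊗[ℂ] A) ∘ₗ
    TensorProduct.map ((TensorProduct.mk ℂ A A).flip 1) Δ.toLinearMap

/-- The linear map `T₂'` with `T₂' (a ⊗ b) = (1 ⊗ a) * Δ(b)`. -/
def T2' (Δ : A →ₐ[ℂ] A ⊗[ℂ] A) : A ⊗[ℂ] A →ₗ[ℂ] A ⊗[ℂ] A :=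
  LinearMap.mul' ℂ (A ⊗[ℂ] A) ∘ₗ
    TensorProduct.map (TensorProduct.mk ℂ A A 1) Δ.toLinearMap

/-- A left cointegral: a nonzero element `h` with `Δ(a)(1 ⊗ h) = a ⊗ h` for all `a`. -/
def IsLeftCointegral (Δ : A →ₐ[ℂ] A ⊗[ℂ] A) (h : A) : Prop :=
  h ≠ 0 ∧ ∀ a : A, Δ a * ((1 : A) ⊗ₜ[ℂ] h) = a ⊗ₜ[ℂ] h

/-- A right cointegral: a nonzero element `k` with `(k ⊗ 1)Δ(a) = k ⊗ a` for all `a`. -/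
def IsRightCointegral (Δ : A →ₐ[ℂ] A ⊗[ℂ] A) (k : A) : Prop :=
  k ≠ 0 ∧ ∀ a : A, (k ⊗ₜ[ℂ] (1 : A)) * Δ a = k ⊗ₜ[ℂ] a

/-- `Δ₁₃(a) = (1 ⊗ σ)(Δ(a) ⊗ 1)`, viewed in `A ⊗ (A ⊗ A)`. -/
def delta13 (Δ : A →ₐ[ℂ] A ⊗[ℂ] A) (a : A) : A ⊗[ℂ] (A ⊗[ℂ] A) :=
  TensorProduct.map LinearMap.id (TensorProduct.comm ℂ A A).toLinearMap
    (TensorProduct.assoc ℂ A A A (Δ a ⊗ₜ[ℂ] (1 : A)))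

section AuxLemmas

lemma sliceR_tmul (ω : A →ₗ[ℂ] ℂ) (a b : A) : sliceR ω (a ⊗ₜ[ℂ] b) = ω b • a := by
  simp [sliceR]

lemma sliceL_tmul (ω : A →ₗ[ℂ] ℂ) (a b : A) : sliceL ω (a ⊗ₜ[ℂ] b) = ω a • b := by
  simp [sliceL]

lemma T1_tmul (Δ : A →ₐ[ℂ] A ⊗[ℂ] A) (a b : A) :
    T1 Δ (a ⊗ₜ[ℂ] b) = Δ a * ((1 : A) ⊗ₜ[ℂ] b) := by
  simp [T1]

/-- The collapsing map `(A ⊗ A) ⊗ A → A ⊗ A` given by `z ⊗ c ↦ φ(c) • z`. -/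
def collapseMap (φ : A →ₗ[ℂ] ℂ) : (A ⊗[ℂ] A) ⊗[ℂ] A →ₗ[ℂ] A ⊗[ℂ] A :=
  (TensorProduct.rid ℂ (A ⊗[ℂ] A)).toLinearMap ∘ₗ TensorProduct.map LinearMap.id φ

lemma collapseMap_tmul (φ : A →ₗ[ℂ] ℂ) (z : A ⊗[ℂ] A) (c : A) :
    collapseMap φ (z ⊗ₜ[ℂ] c) = φ c • z := by
  simp [collapseMap]

/-- Key membership: collapses of `(Δ ⊗ id)(p) * ((1 ⊗ ·) ⊗ id)(q)` lie in the range of `T₁`. -/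
lemma key_mem (Δ : A →ₐ[ℂ] A ⊗[ℂ] A) (φ : A →ₗ[ℂ] ℂ) (p q : A ⊗[ℂ] A) :
    collapseMap φ
      ((TensorProduct.map Δ.toLinearMap LinearMap.id p) *
        (TensorProduct.map (TensorProduct.mk ℂ A A 1) LinearMap.id q)) ∈
      LinearMap.range (T1 Δ) := by
  induction p using TensorProduct.induction_on with
  | zero => simp
  | add u v hu hv =>
    rw [map_add, add_mul, map_add]
    exact add_mem hu hv
  | tmul x1 x2 =>
    induction q using TensorProduct.induction_on with
    | zero => simp
    | add u v hu hv =>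
      rw [map_add, mul_add, map_add]
      exact add_mem hu hv
    | tmul y1 y2 =>
      rw [TensorProduct.map_tmul, TensorProduct.map_tmul]
      simp only [LinearMap.id_coe, id_eq, TensorProduct.mk_apply]
      rw [Algebra.TensorProduct.tmul_mul_tmul, collapseMap_tmul]
      refine ⟨φ (x2 * y2) • (x1 ⊗ₜ[ℂ] y1), ?_⟩
      rw [map_smul, T1_tmul]
      rfl

lemma algAssoc_eq (w : (A ⊗[ℂ] A) ⊗[ℂ] A) :
    Algebra.TensorProduct.assoc ℂ ℂ ℂ A A A w = TensorProduct.assoc ℂ A A A w := rfl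

lemma assoc_mul (u v : (A ⊗[ℂ] A) ⊗[ℂ] A) :
    TensorProduct.assoc ℂ A A A (u * v) =
      TensorProduct.assoc ℂ A A A u * TensorProduct.assoc ℂ A A A v := by
  rw [← algAssoc_eq, ← algAssoc_eq, ← algAssoc_eq, map_mul]

lemma mapId_sliceR_assoc (φ : A →ₗ[ℂ] ℂ) (w : (A ⊗[ℂ] A) ⊗[ℂ] A) :
    TensorProduct.map LinearMap.id (sliceR φ) (TensorProduct.assoc ℂ A A A w) =
      collapseMap φ w := by
  have h : (TensorProduct.map LinearMap.id (sliceR φ)) ∘ₗ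
      (TensorProduct.assoc ℂ A A A).toLinearMap = collapseMap φ := by
    apply TensorProduct.ext_threefold
    intro a b c
    simp [sliceR_tmul, collapseMap_tmul, TensorProduct.tmul_smul, TensorProduct.smul_tmul']
  exact LinearMap.congr_fun h w

lemma assoc_mkOne (q : A ⊗[ℂ] A) :
    TensorProduct.assoc ℂ A A A
        (TensorProduct.map (TensorProduct.mk ℂ A A 1) LinearMap.id q) =
      (1 : A) ⊗ₜ[ℂ] q := by
  induction q using TensorProduct.induction_on with
  | zero => rw [LinearMap.map_zero, LinearEquiv.map_zero, TensorProduct.tmul_zero]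
  | tmul a b => simp
  | add u v hu hv => rw [map_add, map_add, hu, hv, TensorProduct.tmul_add]

lemma mapIdDelta_eq (Δ : A →ₐ[ℂ] A ⊗[ℂ] A) :
    TensorProduct.map LinearMap.id Δ.toLinearMap =
      (Algebra.TensorProduct.map (AlgHom.id ℂ A) Δ).toLinearMap := by
  apply TensorProduct.ext'
  intro a b
  simp

lemma mapIdDelta_mul (Δ : A →ₐ[ℂ] A ⊗[ℂ] A) (u v : A ⊗[ℂ] A) :
    TensorProduct.map LinearMap.id Δ.toLinearMap (u * v) =
      TensorProduct.map LinearMap.id Δ.toLinearMap u *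
        TensorProduct.map LinearMap.id Δ.toLinearMap v := by
  simp only [mapIdDelta_eq, AlgHom.toLinearMap_apply, map_mul]

/-- The collapse identity coming from the left-integral property. -/
lemma collapse_integral (Δ : A →ₐ[ℂ] A ⊗[ℂ] A) (φ : A →ₗ[ℂ] ℂ)
    (hint : ∀ a : A, sliceR φ (Δ a) = φ a • (1 : A)) (w : A ⊗[ℂ] A) :
    TensorProduct.map LinearMap.id (sliceR φ)
        (TensorProduct.map LinearMap.id Δ.toLinearMap w) =
      (sliceR φ w) ⊗ₜ[ℂ] (1 : A) := by
  induction w using TensorProduct.induction_on with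
  | zero => simp
  | tmul c d =>
    rw [TensorProduct.map_tmul, TensorProduct.map_tmul]
    simp only [LinearMap.id_coe, id_eq, AlgHom.toLinearMap_apply]
    rw [hint d, sliceR_tmul, TensorProduct.tmul_smul, TensorProduct.smul_tmul']
  | add u v hu hv =>
    rw [map_add, map_add, hu, hv, map_add, TensorProduct.add_tmul]

/-- The central lemma: `((id ⊗ φ)(Δ(x)(1 ⊗ y))) ⊗ 1` lies in the range of `T₁`. -/
lemma gamma_tmul_one_mem (Δ : A →ₐ[ℂ] A ⊗[ℂ] A) (hΔ : IsCoassoc Δ)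
    (φ : A →ₗ[ℂ] ℂ) (hint : ∀ a : A, sliceR φ (Δ a) = φ a • (1 : A)) (x y : A) :
    (sliceR φ (Δ x * ((1 : A) ⊗ₜ[ℂ] y))) ⊗ₜ[ℂ] (1 : A) ∈ LinearMap.range (T1 Δ) := by
  have step1 := collapse_integral Δ φ hint (Δ x * ((1 : A) ⊗ₜ[ℂ] y))
  have step2 : TensorProduct.map LinearMap.id Δ.toLinearMap (Δ x * ((1 : A) ⊗ₜ[ℂ] y)) =
      TensorProduct.map LinearMap.id Δ.toLinearMap (Δ x) * ((1 : A) ⊗ₜ[ℂ] Δ y) := by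
    rw [mapIdDelta_mul]
    congr 1
  have step3 : TensorProduct.map LinearMap.id Δ.toLinearMap (Δ x) =
      TensorProduct.assoc ℂ A A A
        (TensorProduct.map Δ.toLinearMap LinearMap.id (Δ x)) := (hΔ x).symm
  rw [← step1, step2, step3, ← assoc_mkOne (Δ y), ← assoc_mul, mapId_sliceR_assoc]
  exact key_mem Δ φ (Δ x) (Δ y)

lemma xi_sliceR (ξ ω : A →ₗ[ℂ] ℂ) (w : A ⊗[ℂ] A) :
    ξ (sliceR ω w) = ω (sliceL ξ w) := by
  induction w using TensorProduct.induction_on with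
  | zero => simp
  | tmul a b =>
    rw [sliceR_tmul, sliceL_tmul, map_smul, map_smul, smul_eq_mul, smul_eq_mul, mul_comm]
  | add u v hu hv => rw [map_add, map_add, map_add, map_add, hu, hv]

lemma xi_phi (φ ξ : A →ₗ[ℂ] ℂ) (w : A ⊗[ℂ] A) (y : A) :
    ξ (sliceR φ (w * ((1 : A) ⊗ₜ[ℂ] y))) = φ (sliceL ξ w * y) := by
  induction w using TensorProduct.induction_on with
  | zero => simp
  | tmul a b =>
    rw [Algebra.TensorProduct.tmul_mul_tmul, mul_one, sliceR_tmul, sliceL_tmul,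
      map_smul, smul_mul_assoc, map_smul, smul_eq_mul, smul_eq_mul, mul_comm]
  | add u v hu hv =>
    rw [add_mul, map_add, map_add, hu, hv, map_add, add_mul, map_add]

lemma sliceR_mem_span (φ : A →ₗ[ℂ] ℂ) (hφf : IsFaithful φ) (w : A ⊗[ℂ] A)
    (ω : A →ₗ[ℂ] ℂ) :
    sliceR ω w ∈
      Submodule.span ℂ {z : A | ∃ y : A, z = sliceR φ (w * ((1 : A) ⊗ₜ[ℂ] y))} := by
  set Y := Submodule.span ℂ {z : A | ∃ y : A, z = sliceR φ (w * ((1 : A) ⊗ₜ[ℂ] y))} with hY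
  by_contra hc
  have hπ : Y.mkQ (sliceR ω w) ≠ 0 := by
    rw [Submodule.mkQ_apply, ne_eq, Submodule.Quotient.mk_eq_zero]
    exact hc
  obtain ⟨f, hf⟩ : ∃ f : Module.Dual ℂ (A ⧸ Y), f (Y.mkQ (sliceR ω w)) ≠ 0 := by
    by_contra h
    push_neg at h
    exact hπ ((Module.forall_dual_apply_eq_zero_iff ℂ _).mp h)
  set ξ : A →ₗ[ℂ] ℂ := f ∘ₗ Y.mkQ with hξ
  have hzero : ∀ y : A, φ (sliceL ξ w * y) = 0 := by
    intro y
    rw [← xi_phi φ ξ w y]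
    have hmem : sliceR φ (w * ((1 : A) ⊗ₜ[ℂ] y)) ∈ Y :=
      Submodule.subset_span ⟨y, rfl⟩
    have : Y.mkQ (sliceR φ (w * ((1 : A) ⊗ₜ[ℂ] y))) = 0 := by
      rw [Submodule.mkQ_apply, Submodule.Quotient.mk_eq_zero]
      exact hmem
    rw [hξ, LinearMap.comp_apply, this, map_zero]
  have hz0 : sliceL ξ w = 0 := hφf.2 _ hzero
  have : ξ (sliceR ω w) = 0 := by rw [xi_sliceR ξ ω w, hz0, map_zero]
  exact hf this

end AuxLemmas

/-- If the left leg of `Δ` is all of `A` and there is a faithful left integral, then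
`T₁ : a ⊗ b ↦ Δ(a)(1 ⊗ b)` is surjective. -/
theorem T1_surjective_of_faithful_left_integral
    (Δ : A →ₐ[ℂ] A ⊗[ℂ] A) (hΔ : IsCoassoc Δ) (hleg : leftLeg Δ = ⊤)
    (φ : A →ₗ[ℂ] ℂ) (hφ : IsLeftIntegral Δ φ) (hφf : IsFaithful φ) :
    Function.Surjective (T1 Δ) := by
  obtain ⟨-, hint⟩ := hφ
  rw [← LinearMap.range_eq_top]
  have hone : ∀ c : A, c ⊗ₜ[ℂ] (1 : A) ∈ LinearMap.range (T1 Δ) := by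
    intro c
    have hS : leftLeg Δ ≤
        Submodule.comap ((TensorProduct.mk ℂ A A).flip 1) (LinearMap.range (T1 Δ)) := by
      rw [leftLeg]
      apply Submodule.span_le.mpr
      rintro z ⟨a, ω, rfl⟩
      have h2 : Submodule.span ℂ
          {z : A | ∃ y : A, z = sliceR φ (Δ a * ((1 : A) ⊗ₜ[ℂ] y))} ≤
          Submodule.comap ((TensorProduct.mk ℂ A A).flip 1) (LinearMap.range (T1 Δ)) := by
        apply Submodule.span_le.mpr
        rintro _ ⟨y, rfl⟩
        simp only [SetLike.mem_coe, Submodule.mem_comap, LinearMap.flip_apply,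
          TensorProduct.mk_apply]
        exact gamma_tmul_one_mem Δ hΔ φ hint a y
      exact h2 (sliceR_mem_span φ hφf (Δ a) ω)
    have hmem : c ∈ leftLeg Δ := by rw [hleg]; exact Submodule.mem_top
    have := hS hmem
    simpa using this
  have hmul : ∀ u : A ⊗[ℂ] A, ∀ d : A,
      T1 Δ u * ((1 : A) ⊗ₜ[ℂ] d) ∈ LinearMap.range (T1 Δ) := by
    intro u d
    induction u using TensorProduct.induction_on with
    | zero => simp
    | tmul a b =>
      rw [T1_tmul, mul_assoc, Algebra.TensorProduct.tmul_mul_tmul, one_mul]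
      exact ⟨a ⊗ₜ[ℂ] (b * d), (T1_tmul Δ a (b * d))⟩
    | add u v hu hv =>
      rw [map_add, add_mul]
      exact add_mem hu hv
  rw [eq_top_iff]
  rintro z -
  induction z using TensorProduct.induction_on with
  | zero => exact zero_mem _
  | tmul c d =>
    obtain ⟨u, hu⟩ := hone c
    have heq : c ⊗ₜ[ℂ] d = T1 Δ u * ((1 : A) ⊗ₜ[ℂ] d) := by
      rw [hu, Algebra.TensorProduct.tmul_mul_tmul, mul_one, one_mul]
    rw [heq]
    exact hmul u d
  | add u v hu hv => exact add_mem hu hv
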